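/- Let f be a Laurent series that is analytic on the annulus A[r1,r2] with 0 < r1 ≤ r2, and let z0 ∈ A[r1,r2]. Then |f(z0)| ≤ |f|_{|z0|}. Moreover, there exists a finite subset T of the residue field F̃ such that for every z with |z| = |z0| and |f(z)| < |f|_{|z0|}, the residue class of z/z0 in F̃ belongs to T. -/
import Mathlib


open Filter Topology

variable {F : Type*} [NontriviallyNormedField F]

/-- Value of the power series with coefficients `a` at `z`. -/
noncomputable def psEval (a : ℕ → F) (z : F) : F := ∑' n : ℕ, a n * z ^ n

/-- Value of the Laurent series with coefficients `c` at `z`. -/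
noncomputable def lEval (c : ℤ → F) (z : F) : F := ∑' n : ℤ, c n * z ^ n

/-- Gauss norm `|f|_r = sup_n |a_n| r^n` of a power series. -/
noncomputable def pNorm (a : ℕ → F) (r : ℝ) : ℝ := ⨆ n : ℕ, ‖a n‖ * r ^ n

/-- Gauss norm `|f|_r = sup_n |c_n| r^n` of a Laurent series. -/
noncomputable def lNorm (c : ℤ → F) (r : ℝ) : ℝ := ⨆ n : ℤ, ‖c n‖ * r ^ n

/-- The Laurent series `c` is analytic on the annulus `A[r1,r2]`. -/
def LaurentOn (c : ℤ → F) (r1 r2 : ℝ) : Prop :=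
  ∀ r : ℝ, r1 ≤ r → r ≤ r2 → Tendsto (fun n : ℤ => ‖c n‖ * r ^ n) cofinite (nhds 0)

/-- The Laurent series `c` is analytic on `A[r1,∞)`. -/
def LaurentOnInfty (c : ℤ → F) (r1 : ℝ) : Prop :=
  ∀ r : ℝ, r1 ≤ r → Tendsto (fun n : ℤ => ‖c n‖ * r ^ n) cofinite (nhds 0)

/-- The power series `a` is analytic on the closed ball `B_{≤ r}`. -/
def PSOnClosed (a : ℕ → F) (r : ℝ) : Prop :=
  Tendsto (fun n : ℕ => ‖a n‖ * r ^ n) atTop (nhds 0)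

/-- The power series `a` is analytic on the open ball `B_{< R}`. -/
def PSOnOpen (a : ℕ → F) (R : ℝ) : Prop :=
  ∀ r : ℝ, 0 < r → r < R → Tendsto (fun n : ℕ => ‖a n‖ * r ^ n) atTop (nhds 0)

/-- The power series `a` is entire: it converges on all of `F`. -/
def Entire (a : ℕ → F) : Prop :=
  ∀ r : ℝ, 0 < r → Tendsto (fun n : ℕ => ‖a n‖ * r ^ n) atTop (nhds 0)

/-- `k(f,r)` for a Laurent series. -/
noncomputable def kk (c : ℤ → F) (r : ℝ) : ℤ := sInf {n : ℤ | ‖c n‖ * r ^ n = lNorm c r}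

/-- `K(f,r)` for a Laurent series. -/
noncomputable def KK (c : ℤ → F) (r : ℝ) : ℤ := sSup {n : ℤ | ‖c n‖ * r ^ n = lNorm c r}

/-- Product of two Laurent series. -/
noncomputable def laurentMul (c d : ℤ → F) : ℤ → F := fun n => ∑' i : ℤ, c i * d (n - i)

/-- The Laurent series `1`. -/
noncomputable def laurentOne : ℤ → F := fun n => if n = 0 then 1 else 0

/-- Gauss norm of a polynomial. -/
noncomputable def pgNorm (P : Polynomial F) (r : ℝ) : ℝ := ⨆ n : ℕ, ‖P.coeff n‖ * r ^ n

/-- `k(P,r)` for a polynomial. -/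
noncomputable def kP (P : Polynomial F) (r : ℝ) : ℕ :=
  sInf {n : ℕ | ‖P.coeff n‖ * r ^ n = pgNorm P r}

/-- `K(P,r)` for a polynomial. -/
noncomputable def KP (P : Polynomial F) (r : ℝ) : ℕ :=
  sSup {n : ℕ | ‖P.coeff n‖ * r ^ n = pgNorm P r}

/-- A polynomial regarded as a Laurent series. -/
noncomputable def polyToLaurent (P : Polynomial F) : ℤ → F :=
  fun n => if 0 ≤ n then P.coeff n.toNat else 0

/-- `f` vanishes to order exactly `m` at `z0`, as witnessed by a convergent local
power series expansion of `f` about `z0`. -/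
def HasOrderAt (f : F → F) (z0 : F) (m : ℕ) : Prop :=
  ∃ δ > (0 : ℝ), ∃ b : ℕ → F,
    (∀ z : F, ‖z - z0‖ < δ → f z = ∑' n : ℕ, b n * (z - z0) ^ n) ∧
    (∀ j < m, b j = 0) ∧ b m ≠ 0

/-- Order of vanishing at `0` of a power series. -/
noncomputable def ord0 (c : ℕ → F) : ℕ := sInf {n : ℕ | c n ≠ 0}

/-- Radius of convergence of a power series: the sup of the radii `r` such that
the terms `|c_j| r^j` tend to `0`. -/
noncomputable def convRadius (c : ℕ → F) : ENNReal :=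
  ⨆ (r : NNReal) (_ : Tendsto (fun j : ℕ => ‖c j‖ * (r : ℝ) ^ j) atTop (nhds 0)), (r : ENNReal)

/-- The ring of integers `O = {z : |z| ≤ 1}` of a non-Archimedean field. -/
def integerRing (hna : IsNonarchimedean (fun x : F => ‖x‖)) : Subring F where
  carrier := {z : F | ‖z‖ ≤ 1}
  mul_mem' := by
    intro a b ha hb
    simp only [Set.mem_setOf_eq] at *
    rw [norm_mul]
    nlinarith [norm_nonneg a, norm_nonneg b]
  one_mem' := by simp
  add_mem' := by
    intro a b ha hb
    simp only [Set.mem_setOf_eq] at *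
    exact le_trans (hna a b) (max_le ha hb)
  zero_mem' := by simp
  neg_mem' := by
    intro a ha
    simpa using ha

/-- The maximal ideal `M = {z : |z| < 1}` of the ring of integers. -/
def maxIdeal (hna : IsNonarchimedean (fun x : F => ‖x‖)) : Ideal (integerRing hna) where
  carrier := {z : integerRing hna | ‖(z : F)‖ < 1}
  add_mem' := by
    intro a b ha hb
    simp only [Set.mem_setOf_eq] at *
    calc ‖((a + b : integerRing hna) : F)‖ = ‖(a : F) + (b : F)‖ := by norm_cast
    _ ≤ max ‖(a : F)‖ ‖(b : F)‖ := hna _ _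
    _ < 1 := max_lt ha hb
  zero_mem' := by simp
  smul_mem' := by
    intro c x hx
    simp only [Set.mem_setOf_eq, smul_eq_mul] at *
    calc ‖((c * x : integerRing hna) : F)‖ = ‖(c : F)‖ * ‖(x : F)‖ := by
          push_cast; exact norm_mul _ _
    _ < 1 := by
          have hc : ‖(c : F)‖ ≤ 1 := c.2
          nlinarith [norm_nonneg (c : F), norm_nonneg (x : F)]


section Aux

lemma myFinite_setOf_ge {t : ℤ → ℝ} (htend : Filter.Tendsto t Filter.cofinite (nhds 0))
    {ε : ℝ} (hε : 0 < ε) : {n : ℤ | ε ≤ t n}.Finite := by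
  have h1 : ∀ᶠ n in Filter.cofinite, t n < ε := htend (Iio_mem_nhds hε)
  exact (Filter.eventually_cofinite.mp h1).subset (fun n hn => not_lt.2 hn)

lemma myExists_max {t : ℤ → ℝ} (h0 : ∀ n, 0 ≤ t n)
    (htend : Filter.Tendsto t Filter.cofinite (nhds 0)) : ∃ N, ∀ n, t n ≤ t N := by
  by_cases hz : ∀ n, t n = 0
  · exact ⟨0, fun n => by rw [hz n, hz 0]⟩
  · push_neg at hz
    obtain ⟨n0, hn0⟩ := hz
    have hpos : 0 < t n0 := lt_of_le_of_ne (h0 n0) (Ne.symm hn0)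
    have hfin : {n : ℤ | t n0 ≤ t n}.Finite := myFinite_setOf_ge htend hpos
    have hmem : n0 ∈ hfin.toFinset := by simp
    obtain ⟨N, hNmem, hNmax⟩ := Finset.exists_max_image hfin.toFinset t ⟨n0, hmem⟩
    refine ⟨N, fun n => ?_⟩
    by_cases hn : n ∈ hfin.toFinset
    · exact hNmax n hn
    · have : ¬ t n0 ≤ t n := by simpa using hn
      exact (not_le.1 this).le.trans (hNmax n0 hmem)

lemma myExists_strict_bound {t : ℤ → ℝ} (h0 : ∀ n, 0 ≤ t n)
    (htend : Filter.Tendsto t Filter.cofinite (nhds 0)) {M : ℝ} (hM : 0 < M)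
    (hle : ∀ n, t n ≤ M) :
    ∃ M', 0 ≤ M' ∧ M' < M ∧ ∀ n, t n ≠ M → t n ≤ M' := by
  have hhalf : 0 < M / 2 := by linarith
  have hBfin : {n : ℤ | M / 2 ≤ t n ∧ t n ≠ M}.Finite :=
    (myFinite_setOf_ge htend hhalf).subset (fun n hn => hn.1)
  rcases hBfin.toFinset.eq_empty_or_nonempty with he | hne
  · refine ⟨M / 2, by linarith, by linarith, fun n hn => ?_⟩
    by_contra hcon
    have : n ∈ hBfin.toFinset := by
      simp only [Set.Finite.mem_toFinset, Set.mem_setOf_eq]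
      exact ⟨(not_le.1 hcon).le, hn⟩
    simp [he] at this
  · obtain ⟨b, hbmem, hbmax⟩ := Finset.exists_max_image hBfin.toFinset t hne
    have hb : t b ≠ M := by
      have := hbmem; simp only [Set.Finite.mem_toFinset, Set.mem_setOf_eq] at this
      exact this.2
    have hblt : t b < M := lt_of_le_of_ne (hle b) hb
    refine ⟨max (M / 2) (t b), le_trans hhalf.le (le_max_left _ _),
      max_lt (by linarith) hblt, fun n hn => ?_⟩
    by_cases hnB : n ∈ hBfin.toFinset
    · exact le_trans (hbmax n hnB) (le_max_right _ _)
    · have : ¬ (M / 2 ≤ t n ∧ t n ≠ M) := by simpa using hnB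
      have h2 : t n < M / 2 := by
        by_contra hcon
        exact this ⟨not_lt.1 hcon, hn⟩
      exact le_trans h2.le (le_max_left _ _)

end Aux

/-- **Maximum modulus principle on annuli.** If `f` is analytic on `A[r1,r2]` and
`z0 ∈ A[r1,r2]`, then `|f(z0)| ≤ |f|_{|z0|}`; moreover there is a finite set `T` of
residue classes such that whenever `|z| = |z0|` and `|f(z)| < |f|_{|z0|}`, the residue
class of `z / z0` lies in `T`. -/
theorem stmt0 {F : Type*} [NontriviallyNormedField F] [CompleteSpace F] [IsAlgClosed F]
    (hna : IsNonarchimedean (fun x : F => ‖x‖))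
    (r1 r2 : ℝ) (hr1 : 0 < r1) (hr12 : r1 ≤ r2)
    (c : ℤ → F) (hc : LaurentOn c r1 r2)
    (z0 : F) (hz0l : r1 ≤ ‖z0‖) (hz0r : ‖z0‖ ≤ r2) :
    ‖lEval c z0‖ ≤ lNorm c ‖z0‖ ∧
      ∃ T : Finset ((integerRing hna) ⧸ (maxIdeal hna)),
        ∀ z : F, ‖z‖ = ‖z0‖ → ‖lEval c z‖ < lNorm c ‖z0‖ →
          ∀ w : integerRing hna, (w : F) = z / z0 →
            Ideal.Quotient.mk (maxIdeal hna) w ∈ T := by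
    classical
  haveI : IsUltrametricDist F := IsUltrametricDist.isUltrametricDist_of_isNonarchimedean_norm hna
  have hrpos : (0:ℝ) < ‖z0‖ := lt_of_lt_of_le hr1 hz0l
  have hz0ne : z0 ≠ 0 := by
    intro h; rw [h, norm_zero] at hrpos; exact lt_irrefl 0 hrpos
  set r : ℝ := ‖z0‖ with hrdef
  set t : ℤ → ℝ := fun n => ‖c n‖ * r ^ n with htdef
  have ht0 : ∀ n, 0 ≤ t n := fun n => mul_nonneg (norm_nonneg _) (zpow_nonneg hrpos.le n)
  have htend : Filter.Tendsto t Filter.cofinite (nhds 0) := hc r hz0l hz0r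
  obtain ⟨N, hN⟩ := myExists_max ht0 htend
  have hlN : lNorm c r = t N := by
    refine le_antisymm (ciSup_le hN) ?_
    exact le_ciSup ⟨t N, by rintro x ⟨n, rfl⟩; exact hN n⟩ N
  have hterm : ∀ z : F, ‖z‖ = r → ∀ n : ℤ, ‖c n * z ^ n‖ = t n := by
    intro z hz n; rw [norm_mul, norm_zpow, hz]
  have key1 : ∀ z : F, ‖z‖ = r → ‖lEval c z‖ ≤ t N := by
    intro z hz
    refine IsUltrametricDist.norm_tsum_le_of_forall_le_of_nonneg (ht0 N) ?_
    intro n; rw [hterm z hz n]; exact hN n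
  refine ⟨by rw [hlN]; exact key1 z0 rfl, ?_⟩
  by_cases hM0 : t N = 0
  · refine ⟨∅, fun z hz hlt w hw => absurd hlt ?_⟩
    rw [hlN, hM0]
    exact not_lt.2 (norm_nonneg _)
  have hM : 0 < t N := lt_of_le_of_ne (ht0 N) (Ne.symm hM0)
  set M : ℝ := t N with hMdef
  obtain ⟨M', hM'0, hM'lt, hM'⟩ := myExists_strict_bound ht0 htend hM hN
  have hSfin : {n : ℤ | t n = M}.Finite :=
    (myFinite_setOf_ge htend (by linarith : (0:ℝ) < M / 2)).subset
      (fun n hn => by rw [Set.mem_setOf_eq] at hn ⊢; rw [hn]; linarith)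
  set SF : Finset ℤ := hSfin.toFinset with hSFdef
  have hmemSF : ∀ n, n ∈ SF ↔ t n = M := fun n => by simp [hSFdef]
  have hSFne : SF.Nonempty := ⟨N, (hmemSF N).2 rfl⟩
  set k : ℤ := SF.min' hSFne with hkdef
  set K : ℤ := SF.max' hSFne with hKdef
  have hkS : k ∈ SF := SF.min'_mem hSFne
  have hKS : K ∈ SF := SF.max'_mem hSFne
  have hkle : ∀ n ∈ SF, k ≤ n := fun n hn => SF.min'_le n hn
  have htk : t k = M := (hmemSF k).1 hkS
  have htK : t K = M := (hmemSF K).1 hKS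
  set a : F := c k * z0 ^ k with hadef
  have hanorm : ‖a‖ = M := by rw [hadef, norm_mul, norm_zpow]; exact htk
  have hane : a ≠ 0 := by
    intro h; rw [h, norm_zero] at hanorm; exact hM0 hanorm.symm
  have hecoe : ∀ n : ℤ, ‖c n * z0 ^ n / a‖ ≤ 1 := by
    intro n
    rw [norm_div, norm_mul, norm_zpow, hanorm]
    exact div_le_one_of_le₀ (hN n) hM.le
  set e : ℤ → integerRing hna := fun n => ⟨c n * z0 ^ n / a, hecoe n⟩ with hedef
  have henorm : ∀ n ∈ SF, ‖(e n : F)‖ = 1 := by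
    intro n hn
    show ‖c n * z0 ^ n / a‖ = 1
    have h3 : ‖c n‖ * ‖z0‖ ^ n = M := (hmemSF n).1 hn
    rw [norm_div, norm_mul, norm_zpow, hanorm, h3, div_self hM0]
  set Q : Polynomial (integerRing hna) :=
    ∑ n ∈ SF, Polynomial.C (e n) * Polynomial.X ^ (n - k).toNat with hQdef
  set mk' := Ideal.Quotient.mk (maxIdeal hna) with hmkdef
  have hinj : ∀ n ∈ SF, ∀ m ∈ SF, (n - k).toNat = (m - k).toNat → n = m := by
    intro n hn m hm h
    have h1 : k ≤ n := hkle n hn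
    have h2 : k ≤ m := hkle m hm
    omega
  have hQcoeff : Q.coeff ((K - k).toNat) = e K := by
    rw [hQdef, Polynomial.finset_sum_coeff]
    rw [Finset.sum_eq_single_of_mem K hKS]
    · simp [Polynomial.coeff_C_mul, Polynomial.coeff_X_pow]
    · intro n hn hne
      rw [Polynomial.coeff_C_mul, Polynomial.coeff_X_pow, if_neg, mul_zero]
      exact fun h => hne (hinj n hn K hKS h.symm)
  have hmkeK : mk' (e K) ≠ 0 := by
    rw [Ne, hmkdef, Ideal.Quotient.eq_zero_iff_mem]
    intro h
    have h2 : ‖(e K : F)‖ < 1 := h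
    rw [henorm K hKS] at h2
    exact lt_irrefl 1 h2
  have hQbne : Q.map mk' ≠ 0 := by
    intro h
    apply hmkeK
    rw [← hQcoeff, ← Polynomial.coeff_map, h, Polynomial.coeff_zero]
  have hprime : (maxIdeal hna).IsPrime := by
    constructor
    · intro h
      have h1 : (1 : integerRing hna) ∈ maxIdeal hna := h ▸ Submodule.mem_top
      have h2 : ‖((1 : integerRing hna) : F)‖ < 1 := h1
      rw [OneMemClass.coe_one, norm_one] at h2
      exact lt_irrefl 1 h2
    · intro x y hxy
      have hxy' : ‖(x : F)‖ * ‖(y : F)‖ < 1 := by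
        have h2 : ‖((x * y : integerRing hna) : F)‖ < 1 := hxy
        rwa [MulMemClass.coe_mul, norm_mul] at h2
      by_contra hcon
      push_neg at hcon
      obtain ⟨hx, hy⟩ := hcon
      have hx1 : ‖(x : F)‖ = 1 := le_antisymm x.2 (not_lt.1 fun h => hx h)
      have hy1 : ‖(y : F)‖ = 1 := le_antisymm y.2 (not_lt.1 fun h => hy h)
      rw [hx1, hy1, one_mul] at hxy'
      exact lt_irrefl 1 hxy'
  haveI := hprime
  haveI : IsDomain (integerRing hna ⧸ maxIdeal hna) := Ideal.Quotient.isDomain _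
  refine ⟨(Q.map mk').roots.toFinset, ?_⟩
  intro z hz hlt w hw
  rw [hlN] at hlt
  have hzne : z ≠ 0 := by
    intro h; rw [h, norm_zero] at hz; exact hrpos.ne' hz.symm
  set u : F := z / z0 with hudef
  have hu1 : ‖u‖ = 1 := by rw [hudef, norm_div, hz, div_self hrpos.ne']
  have hune : u ≠ 0 := by
    intro h; rw [h, norm_zero] at hu1; exact one_ne_zero hu1.symm
  have hzu : z = z0 * u := by rw [hudef, mul_div_cancel₀ _ hz0ne]
  have hsum : Summable (fun n : ℤ => c n * z ^ n) := by
    apply NonarchimedeanAddGroup.summable_of_tendsto_cofinite_zero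
    rw [tendsto_zero_iff_norm_tendsto_zero]
    exact htend.congr (fun n => (hterm z hz n).symm)
  have hsplit : (∑' x : (SF : Set ℤ), c x * z ^ (x:ℤ)) + ∑' x : ↑((SF : Set ℤ))ᶜ, c x * z ^ (x:ℤ)
      = ∑' n : ℤ, c n * z ^ n :=
    Summable.tsum_add_tsum_compl (hsum.subtype _) (hsum.subtype _)
  have hfinsum : (∑' x : (SF : Set ℤ), c x * z ^ (x:ℤ)) = ∑ n ∈ SF, c n * z ^ n := by
    exact Finset.tsum_subtype SF (fun n => c n * z ^ n)
  have hRnorm : ‖∑' x : ↑((SF : Set ℤ))ᶜ, c x * z ^ (x:ℤ)‖ ≤ M' := by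
    refine IsUltrametricDist.norm_tsum_le_of_forall_le_of_nonneg hM'0 ?_
    rintro ⟨n, hn⟩
    rw [hterm z hz n]
    refine hM' n ?_
    intro hcon
    exact hn (by simpa [hSFdef] using hcon)
  have hG : ‖∑ n ∈ SF, c n * z ^ n‖ < M := by
    have hGeq : ∑ n ∈ SF, c n * z ^ n
        = lEval c z + -(∑' x : ↑((SF : Set ℤ))ᶜ, c x * z ^ (x:ℤ)) := by
      rw [lEval, ← hsplit, hfinsum]; ring
    rw [hGeq]
    refine lt_of_le_of_lt (IsUltrametricDist.norm_add_le_max _ _) ?_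
    rw [norm_neg]
    exact max_lt hlt (lt_of_le_of_lt hRnorm hM'lt)
  have hQeval : ((Q.eval w : integerRing hna) : F)
      = ∑ n ∈ SF, (c n * z0 ^ n / a) * u ^ ((n - k).toNat) := by
    rw [hQdef, Polynomial.eval_finset_sum]
    push_cast
    refine Finset.sum_congr rfl (fun n hn => ?_)
    rw [Polynomial.eval_mul, Polynomial.eval_C, Polynomial.eval_pow, Polynomial.eval_X]
    push_cast [hw]
    rfl
  have htermeq : ∀ n ∈ SF,
      a * u ^ (k : ℤ) * ((c n * z0 ^ n / a) * u ^ ((n - k).toNat)) = c n * z ^ n := by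
    intro n hn
    have hnk : k ≤ n := hkle n hn
    have hup : (u : F) ^ ((n - k).toNat) = u ^ ((n - k) : ℤ) := by
      rw [← zpow_natCast]; congr 1; omega
    rw [hup]
    have : a * u ^ (k : ℤ) * ((c n * z0 ^ n / a) * u ^ ((n - k) : ℤ))
        = (a / a) * (c n * (z0 ^ n * (u ^ (k : ℤ) * u ^ ((n - k) : ℤ)))) := by ring
    rw [this, div_self hane, one_mul, ← zpow_add₀ hune, add_sub_cancel, hzu, mul_zpow]
  have hEeq : a * u ^ (k : ℤ) * ((Q.eval w : integerRing hna) : F) = ∑ n ∈ SF, c n * z ^ n := by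
    rw [hQeval, Finset.mul_sum]
    exact Finset.sum_congr rfl htermeq
  have hQnorm : ‖((Q.eval w : integerRing hna) : F)‖ < 1 := by
    have h1 : ‖a * u ^ (k : ℤ) * ((Q.eval w : integerRing hna) : F)‖ < M := by
      rw [hEeq]; exact hG
    rw [norm_mul, norm_mul, hanorm, norm_zpow, hu1, one_zpow, mul_one] at h1
    exact (mul_lt_iff_lt_one_right hM).1 h1
  have hQmem : Q.eval w ∈ maxIdeal hna := hQnorm
  have heval0 : (Q.map mk').eval (mk' w) = 0 := by
    rw [hmkdef, Polynomial.eval_map, Polynomial.eval₂_at_apply,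
      Ideal.Quotient.eq_zero_iff_mem]
    exact hQmem
  rw [Multiset.mem_toFinset, Polynomial.mem_roots hQbne]
  exact heval0
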